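/- arXiv:2508.18650 — 3 statements merged into one kernel-verified Lean document; each statement's English description precedes it below -/
import Mathlib

section
/- Let l ∈ ℝ, k ∈ ℕ, t ≥ 0, and suppose c : [0,∞) → ℝ satisfies c(s) = e^{ls} + O(s^{k+1}) as s → 0⁺. Then |c(t/n)^n − e^{tl}| = O(1/n^k) as n → ∞. -/
open Filter Topology Asymptotics

/-- Scalar Galkin–Remizov fast convergence: if `c s = e^{l s} + O(s^{k+1})` as
`s → 0⁺`, then `|c (t/n) ^ n - e^{t l}| = O(1/n^k)` as `n → ∞`. -/
theorem scalar_galkin_remizov (c : ℝ → ℝ) (l : ℝ) (k : ℕ) (t : ℝ) (ht : 0 ≤ t)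
    (hc : (fun s : ℝ => c s - Real.exp (l * s)) =O[𝓝[Set.Ici 0] 0]
      fun s : ℝ => s ^ (k + 1)) :
    (fun n : ℕ => c (t / n) ^ n - Real.exp (t * l)) =O[atTop]
      fun n : ℕ => 1 / (n : ℝ) ^ k := by
  obtain ⟨C, hC0, hCO⟩ := hc.exists_pos
  have hbound := hCO.bound
  have htend : Tendsto (fun n : ℕ => t / n) atTop (𝓝[Set.Ici 0] 0) := by
    apply tendsto_nhdsWithin_of_tendsto_nhds_of_eventually_within
    · exact Tendsto.div_atTop tendsto_const_nhds tendsto_natCast_atTop_atTop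
    · filter_upwards with n
      exact div_nonneg ht (Nat.cast_nonneg n)
  have hev := htend.eventually hbound
  rw [isBigO_iff]
  set D := C * t ^ (k + 1) with hD
  have hD0 : 0 ≤ D := mul_nonneg hC0.le (pow_nonneg ht _)
  set E := |l| * t + D with hE
  have hE0 : 0 ≤ E := add_nonneg (mul_nonneg (abs_nonneg l) ht) hD0
  refine ⟨D * (Real.exp E * Real.exp (|l| * t)), ?_⟩
  filter_upwards [hev, eventually_ge_atTop 1] with n hn hn1
  have hn1' : (1 : ℝ) ≤ (n : ℝ) := by exact_mod_cast hn1
  have hn0 : (0 : ℝ) < (n : ℝ) := lt_of_lt_of_le one_pos hn1'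
  set s := t / (n : ℝ) with hs
  have hs0 : 0 ≤ s := div_nonneg ht hn0.le
  set a := c s with ha
  set b := Real.exp (l * s) with hb
  have hb0 : 0 < b := Real.exp_pos _
  -- bound on |a - b|
  have hab : |a - b| ≤ D / (n : ℝ) ^ (k + 1) := by
    calc |a - b| ≤ C * ‖s ^ (k + 1)‖ := hn
      _ = C * s ^ (k + 1) := by
          rw [Real.norm_eq_abs, abs_of_nonneg (pow_nonneg hs0 _)]
      _ = D / (n : ℝ) ^ (k + 1) := by
          rw [hD, hs, div_pow, mul_div_assoc]
  have hnpow : (n : ℝ) ≤ (n : ℝ) ^ (k + 1) := le_self_pow₀ hn1' (Nat.succ_ne_zero k)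
  have hab' : |a - b| ≤ D / (n : ℝ) :=
    hab.trans (div_le_div_of_nonneg_left hD0 hn0 hnpow)
  -- pointwise exponential bounds
  have hbe : b ≤ Real.exp (|l| * t / n) := by
    apply Real.exp_le_exp.2
    calc l * s ≤ |l| * s := mul_le_mul_of_nonneg_right (le_abs_self l) hs0
      _ = |l| * t / n := by rw [hs, mul_div_assoc]
  have haD : |a| ≤ Real.exp (E / n) := by
    have h1 : |a| ≤ b + D / n := by
      calc |a| = |b + (a - b)| := by ring_nf
        _ ≤ |b| + |a - b| := abs_add_le _ _
        _ = b + |a - b| := by rw [abs_of_pos hb0]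
        _ ≤ b + D / n := by linarith
    have h2 : (1 : ℝ) ≤ Real.exp (|l| * t / n) :=
      Real.one_le_exp (by positivity)
    have h3 : b + D / n ≤ Real.exp (|l| * t / n) * (1 + D / n) := by
      have hDn : 0 ≤ D / n := by positivity
      nlinarith [mul_le_mul_of_nonneg_right h2 hDn]
    have h4 : (1 : ℝ) + D / n ≤ Real.exp (D / n) := by
      have := Real.add_one_le_exp (D / n)
      linarith
    calc |a| ≤ Real.exp (|l| * t / n) * (1 + D / n) := h1.trans h3
      _ ≤ Real.exp (|l| * t / n) * Real.exp (D / n) :=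
          mul_le_mul_of_nonneg_left h4 (Real.exp_pos _).le
      _ = Real.exp (E / n) := by rw [← Real.exp_add, hE]; ring_nf
  -- bound each term of the geometric sum
  have hterm : ∀ i ∈ Finset.range n, |a ^ i * b ^ (n - 1 - i)| ≤
      Real.exp E * Real.exp (|l| * t) := by
    intro i hi
    have hi' : (i : ℝ) ≤ n := by
      exact_mod_cast (Finset.mem_range.1 hi).le
    have h1 : |a ^ i| ≤ Real.exp E := by
      rw [abs_pow]
      calc |a| ^ i ≤ Real.exp (E / n) ^ i :=
            pow_le_pow_left₀ (abs_nonneg a) haD i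
        _ = Real.exp (i * (E / n)) := by rw [← Real.exp_nat_mul]
        _ ≤ Real.exp E := by
            apply Real.exp_le_exp.2
            rw [mul_div_assoc']
            rw [div_le_iff₀ hn0]
            nlinarith
    have hj' : ((n - 1 - i : ℕ) : ℝ) ≤ n := by
      have : (n - 1 - i : ℕ) ≤ n := le_trans (Nat.sub_le _ _) (Nat.sub_le _ _)
      exact_mod_cast this
    have h2 : b ^ (n - 1 - i) ≤ Real.exp (|l| * t) := by
      calc b ^ (n - 1 - i) ≤ Real.exp (|l| * t / n) ^ (n - 1 - i) :=
            pow_le_pow_left₀ hb0.le hbe _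
        _ = Real.exp ((n - 1 - i : ℕ) * (|l| * t / n)) := by rw [← Real.exp_nat_mul]
        _ ≤ Real.exp (|l| * t) := by
            apply Real.exp_le_exp.2
            rw [mul_div_assoc']
            rw [div_le_iff₀ hn0]
            nlinarith [mul_nonneg (abs_nonneg l) ht]
    calc |a ^ i * b ^ (n - 1 - i)| = |a ^ i| * b ^ (n - 1 - i) := by
          rw [abs_mul, abs_of_nonneg (pow_nonneg hb0.le _)]
      _ ≤ Real.exp E * Real.exp (|l| * t) := by
          apply mul_le_mul h1 h2 (pow_nonneg hb0.le _) (Real.exp_pos _).le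
  have hsum : |∑ i ∈ Finset.range n, a ^ i * b ^ (n - 1 - i)| ≤
      n * (Real.exp E * Real.exp (|l| * t)) := by
    calc |∑ i ∈ Finset.range n, a ^ i * b ^ (n - 1 - i)|
        ≤ ∑ i ∈ Finset.range n, |a ^ i * b ^ (n - 1 - i)| :=
          Finset.abs_sum_le_sum_abs _ _
      _ ≤ ∑ _i ∈ Finset.range n, Real.exp E * Real.exp (|l| * t) :=
          Finset.sum_le_sum hterm
      _ = n * (Real.exp E * Real.exp (|l| * t)) := by
          rw [Finset.sum_const, Finset.card_range, nsmul_eq_mul]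
  -- b ^ n = exp (t * l)
  have hbn : b ^ n = Real.exp (t * l) := by
    rw [hb, ← Real.exp_nat_mul, hs]
    congr 1
    field_simp
  have hkey : a ^ n - b ^ n =
      (∑ i ∈ Finset.range n, a ^ i * b ^ (n - 1 - i)) * (a - b) :=
    (geom_sum₂_mul a b n).symm
  have hnz : (n : ℝ) ^ (k + 1) = (n : ℝ) * (n : ℝ) ^ k := by ring
  calc ‖a ^ n - Real.exp (t * l)‖ = |a ^ n - b ^ n| := by rw [hbn, Real.norm_eq_abs]
    _ = |∑ i ∈ Finset.range n, a ^ i * b ^ (n - 1 - i)| * |a - b| := by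
        rw [hkey, abs_mul]
    _ ≤ (n * (Real.exp E * Real.exp (|l| * t))) * (D / (n : ℝ) ^ (k + 1)) := by
        apply mul_le_mul hsum hab (abs_nonneg _)
        positivity
    _ = D * (Real.exp E * Real.exp (|l| * t)) * (1 / (n : ℝ) ^ k) := by
        rw [hnz]
        field_simp
    _ ≤ D * (Real.exp E * Real.exp (|l| * t)) * ‖1 / (n : ℝ) ^ k‖ := by
        rw [Real.norm_eq_abs,
          abs_of_nonneg (show (0:ℝ) ≤ 1 / (n : ℝ) ^ k by positivity)]
end

section
/- For every sequence (a_n) of positive reals with a_n → 0, there exists a continuous function c : [0,∞) → ℝ with c(0) = 1, c'(0) = 0, such that for some t > 0 the convergence |c(t/n)^n − 1| → 0 holds but |c(t/n)^n − 1| ≥ a_n for infinitely many n. That is, the convergence in the scalar Chernoff theorem can be arbitrarily slow. -/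
open Filter Topology

/-- A tent function of height 1 centered at `1/(m k)`. -/
noncomputable def chernoffTent (m : ℕ → ℕ) (k : ℕ) (x : ℝ) : ℝ :=
  max (1 - (m k : ℝ) * |(m k : ℝ) * x - 1|) 0

lemma chernoffTent_nonneg (m : ℕ → ℕ) (k : ℕ) (x : ℝ) : 0 ≤ chernoffTent m k x :=
  le_max_right _ _

lemma chernoffTent_le_one (m : ℕ → ℕ) (k : ℕ) (x : ℝ) : chernoffTent m k x ≤ 1 := by
  unfold chernoffTent
  have h1 : (0:ℝ) ≤ (m k : ℝ) * |(m k : ℝ) * x - 1| := by positivity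
  have : 1 - (m k : ℝ) * |(m k : ℝ) * x - 1| ≤ 1 := by linarith
  exact max_le this one_pos.le

lemma chernoffTent_continuous (m : ℕ → ℕ) (k : ℕ) : Continuous (chernoffTent m k) := by
  unfold chernoffTent
  fun_prop

lemma chernoff_term_nonneg (m : ℕ → ℕ) (k : ℕ) (x : ℝ) :
    0 ≤ (1/2 : ℝ)^k * chernoffTent m k x :=
  mul_nonneg (by positivity) (chernoffTent_nonneg m k x)

lemma chernoff_term_le (m : ℕ → ℕ) (k : ℕ) (x : ℝ) :
    (1/2 : ℝ)^k * chernoffTent m k x ≤ (1/2 : ℝ)^k := by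
  have h2 : (0:ℝ) ≤ (1/2:ℝ)^k := by positivity
  calc (1/2 : ℝ)^k * chernoffTent m k x ≤ (1/2 : ℝ)^k * 1 :=
        mul_le_mul_of_nonneg_left (chernoffTent_le_one m k x) h2
    _ = (1/2 : ℝ)^k := mul_one _

/-- The sum of tents with geometric heights. -/
noncomputable def chernoffG (m : ℕ → ℕ) (x : ℝ) : ℝ :=
  ∑' k, (1/2 : ℝ)^k * chernoffTent m k x

lemma chernoff_summable_geom : Summable (fun k : ℕ => (1/2 : ℝ)^k) :=
  summable_geometric_of_lt_one (by norm_num) (by norm_num)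

lemma chernoffG_summable (m : ℕ → ℕ) (x : ℝ) :
    Summable fun k => (1/2 : ℝ)^k * chernoffTent m k x :=
  Summable.of_nonneg_of_le (fun k => chernoff_term_nonneg m k x)
    (fun k => chernoff_term_le m k x) chernoff_summable_geom

lemma chernoffG_continuous (m : ℕ → ℕ) : Continuous (chernoffG m) := by
  apply continuous_tsum (fun k => (continuous_const.mul (chernoffTent_continuous m k)))
    chernoff_summable_geom
  intro k x
  show ‖(1/2 : ℝ)^k * chernoffTent m k x‖ ≤ (1/2 : ℝ)^k
  rw [Real.norm_eq_abs, abs_of_nonneg (chernoff_term_nonneg m k x)]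
  exact chernoff_term_le m k x

lemma chernoffG_nonneg (m : ℕ → ℕ) (x : ℝ) : 0 ≤ chernoffG m x :=
  tsum_nonneg fun k => chernoff_term_nonneg m k x

lemma chernoffG_zero (m : ℕ → ℕ) (hm : ∀ k, 1 ≤ m k) : chernoffG m 0 = 0 := by
  unfold chernoffG
  have h : ∀ k : ℕ, (1/2 : ℝ)^k * chernoffTent m k 0 = 0 := by
    intro k
    have h1 : (1:ℝ) ≤ (m k : ℝ) := by exact_mod_cast hm k
    have ht : chernoffTent m k 0 = 0 := by
      unfold chernoffTent
      rw [max_eq_right]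
      simp only [mul_zero, zero_sub, abs_neg, abs_one, mul_one]
      linarith
    rw [ht, mul_zero]
  rw [tsum_congr h, tsum_zero]

lemma chernoffG_ge (m : ℕ → ℕ) (hm : ∀ k, 1 ≤ m k) (k : ℕ) :
    (1/2 : ℝ)^k ≤ chernoffG m (1 / (m k : ℝ)) := by
  have hmk : (0:ℝ) < (m k : ℝ) := by exact_mod_cast hm k
  have htent : chernoffTent m k (1 / (m k : ℝ)) = 1 := by
    unfold chernoffTent
    rw [mul_one_div, div_self hmk.ne']
    simp
  have h := Summable.le_tsum (chernoffG_summable m (1 / (m k : ℝ))) k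
    (fun j _ => chernoff_term_nonneg m j _)
  rw [htent, mul_one] at h
  exact h

/-- The convergence in the scalar Chernoff theorem can be arbitrarily slow: for every
sequence of positive reals `aₙ → 0` there exist a continuous `c : [0,∞) → ℝ` with
`c 0 = 1`, `c' 0 = 0`, and some `t > 0` such that `c (t/n) ^ n → 1` but
`|c (t/n) ^ n - 1| ≥ aₙ` for infinitely many `n`. -/
theorem scalar_chernoff_arbitrarily_slow (a : ℕ → ℝ) (hpos : ∀ n, 0 < a n)
    (hlim : Tendsto a atTop (𝓝 0)) :
    ∃ c : ℝ → ℝ, ContinuousOn c (Set.Ici 0) ∧ c 0 = 1 ∧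
      HasDerivWithinAt c 0 (Set.Ici 0) 0 ∧
      ∃ t : ℝ, 0 < t ∧
        Tendsto (fun n : ℕ => c (t / n) ^ n) atTop (𝓝 1) ∧
        ∃ᶠ n in atTop, a n ≤ |c (t / n) ^ n - 1| := by
  -- choose markers m k ≥ max (k+1, ...) with a (m k) ≤ (1/2)^k
  have hex : ∀ k : ℕ, ∃ n : ℕ, (k + 1 ≤ n) ∧ a n ≤ (1/2 : ℝ)^k := by
    intro k
    have h2 : (0:ℝ) < (1/2:ℝ)^k := by positivity
    have h3 : ∀ᶠ n in atTop, a n < (1/2:ℝ)^k := hlim.eventually (eventually_lt_nhds h2)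
    obtain ⟨n, hn1, hn2⟩ := (h3.and (eventually_ge_atTop (k+1))).exists
    exact ⟨n, hn2, hn1.le⟩
  choose m hm1 hm2 using hex
  have hm : ∀ k, 1 ≤ m k := fun k => le_trans (Nat.le_add_left 1 k) (hm1 k)
  set g : ℝ → ℝ := chernoffG m with hg
  have hgc : Continuous g := chernoffG_continuous m
  have hg0 : g 0 = 0 := chernoffG_zero m hm
  refine ⟨fun x => Real.exp (x * g x), ?_, ?_, ?_, 1, one_pos, ?_, ?_⟩
  · exact (Real.continuous_exp.comp (continuous_id.mul hgc)).continuousOn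
  · simp [hg0]
  · -- derivative at 0 within Ici 0
    have hu : HasDerivWithinAt (fun x => x * g x) 0 (Set.Ici 0) 0 := by
      rw [hasDerivWithinAt_iff_tendsto_slope]
      have heq : ∀ᶠ y in 𝓝[Set.Ici 0 \ {0}] (0:ℝ),
          slope (fun x => x * g x) 0 y = g y := by
        filter_upwards [self_mem_nhdsWithin] with y hy
        have hy0 : y ≠ 0 := hy.2
        simp only [slope_def_field]
        field_simp
        ring
      have hgt : Tendsto g (𝓝[Set.Ici 0 \ {0}] (0:ℝ)) (𝓝 0) := by
        have := (hgc.tendsto 0).mono_left (nhdsWithin_le_nhds (s := Set.Ici 0 \ {0}))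
        rwa [hg0] at this
      exact hgt.congr' (heq.mono fun y h => h.symm)
    have := (Real.hasDerivAt_exp ((0:ℝ) * g 0)).comp_hasDerivWithinAt 0 hu
    simpa [Function.comp_def] using this
  · -- convergence
    have hkey : ∀ᶠ n : ℕ in atTop,
        Real.exp (g (1 / (n:ℝ))) = (fun n : ℕ => Real.exp ((1:ℝ)/(n:ℝ) * g ((1:ℝ)/(n:ℝ))) ^ n) n := by
      filter_upwards [eventually_ge_atTop 1] with n hn
      have hn0 : (n:ℝ) ≠ 0 := by positivity
      rw [← Real.exp_nat_mul]
      congr 1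
      field_simp
    have hlim2 : Tendsto (fun n : ℕ => Real.exp (g (1 / (n:ℝ)))) atTop (𝓝 1) := by
      have h1 : Tendsto (fun n : ℕ => (1:ℝ) / (n:ℝ)) atTop (𝓝 0) :=
        tendsto_one_div_atTop_nhds_zero_nat
      have h2 : Tendsto (fun n : ℕ => g (1 / (n:ℝ))) atTop (𝓝 0) := by
        have := (hgc.tendsto 0).comp h1
        rwa [hg0] at this
      simpa [Function.comp_def] using Real.continuous_exp.continuousAt.tendsto.comp h2
    exact hlim2.congr' hkey
  · -- frequently
    rw [Filter.frequently_atTop]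
    intro N
    refine ⟨m N, le_trans (Nat.le_succ N) (hm1 N), ?_⟩
    have hmk : (0:ℝ) < (m N : ℝ) := by exact_mod_cast hm N
    have hgge : (1/2:ℝ)^N ≤ g (1 / (m N : ℝ)) := chernoffG_ge m hm N
    have hval : ((fun x => Real.exp (x * g x)) ((1:ℝ) / (m N : ℝ))) ^ (m N)
        = Real.exp (g (1 / (m N : ℝ))) := by
      rw [← Real.exp_nat_mul]
      congr 1
      field_simp
    rw [hval]
    have hexp : g (1 / (m N : ℝ)) + 1 ≤ Real.exp (g (1 / (m N : ℝ))) :=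
      Real.add_one_le_exp _
    have habs : |Real.exp (g (1 / (m N : ℝ))) - 1| = Real.exp (g (1 / (m N : ℝ))) - 1 := by
      rw [abs_of_nonneg]
      have := Real.one_le_exp (chernoffG_nonneg m (1 / (m N : ℝ)))
      linarith
    rw [habs]
    have := hm2 N
    linarith
end

section
/- Let F be a Banach space, and let C : [0,∞) → L(F) and V a C₀-semigroup be such that ‖C(t)‖ ≤ e^{wt}, ‖V(t)‖ ≤ e^{wt} for all t ≥ 0 and some w ≥ 0. Suppose f ∈ F and t > 0 are such that ‖C(t/n)f − V(t/n)f‖ ≤ K·(t/n)² for all n ≥ 1 and some constant K, and moreover this bound holds uniformly along the orbit: ‖(C(t/n) − V(t/n))V(kt/n)f‖ ≤ K·(t/n)² for all 0 ≤ k ≤ n−1. Then ‖C(t/n)^n f − V(t)f‖ ≤ e^{w t}·K·t²/n for all n ≥ 1. -/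
lemma chernoff_tele {F : Type*} [NormedAddCommGroup F] [NormedSpace ℝ F]
    (A B : F →L[ℝ] F) : ∀ n : ℕ,
    A ^ n - B ^ n = ∑ k ∈ Finset.range n, A ^ (n - 1 - k) * (A - B) * B ^ k := by
  intro n
  induction n with
  | zero => simp
  | succ n ih =>
    rw [Finset.sum_range_succ]
    have h1 : ∑ k ∈ Finset.range n, A ^ (n + 1 - 1 - k) * (A - B) * B ^ k
        = A * ∑ k ∈ Finset.range n, A ^ (n - 1 - k) * (A - B) * B ^ k := by
      rw [Finset.mul_sum]
      refine Finset.sum_congr rfl ?_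
      intro k hk
      simp only [Finset.mem_range] at hk
      have h2 : n + 1 - 1 - k = (n - 1 - k) + 1 := by omega
      rw [h2, pow_succ', mul_assoc, mul_assoc, mul_assoc]
    rw [h1, ← ih]
    have : n + 1 - 1 - n = 0 := by omega
    rw [this, pow_zero, one_mul, mul_sub, sub_mul, pow_succ' A, pow_succ' B]
    abel

/-- Quantitative Chernoff estimate: if `‖C s‖ ≤ e^{w s}` and `‖V s‖ ≤ e^{w s}` for
`s ≥ 0`, `V` is a C₀-semigroup, and `C (t/n)` and `V (t/n)` differ by `K (t/n)²`
uniformly along the orbit of `f`, then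
`‖C (t/n)^n f - V t f‖ ≤ e^{w t} K t² / n` for all `n ≥ 1`. -/
theorem quantitative_chernoff {F : Type*} [NormedAddCommGroup F] [NormedSpace ℝ F]
    [CompleteSpace F] (C V : ℝ → F →L[ℝ] F) (w : ℝ) (hw : 0 ≤ w)
    (hV0 : V 0 = 1)
    (hVadd : ∀ s u : ℝ, 0 ≤ s → 0 ≤ u → V (s + u) = V s * V u)
    (hVcont : ∀ g : F, ContinuousOn (fun s => V s g) (Set.Ici 0))
    (hCbound : ∀ s : ℝ, 0 ≤ s → ‖C s‖ ≤ Real.exp (w * s))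
    (hVbound : ∀ s : ℝ, 0 ≤ s → ‖V s‖ ≤ Real.exp (w * s))
    (f : F) (t : ℝ) (ht : 0 < t) (K : ℝ)
    (hdiff : ∀ n : ℕ, 1 ≤ n → ‖C (t / n) f - V (t / n) f‖ ≤ K * (t / n) ^ 2)
    (horbit : ∀ n : ℕ, 1 ≤ n → ∀ k : ℕ, k < n →
      ‖(C (t / n) - V (t / n)) (V (k * t / n) f)‖ ≤ K * (t / n) ^ 2) :
    ∀ n : ℕ, 1 ≤ n →
      ‖((C (t / n)) ^ n) f - V t f‖ ≤ Real.exp (w * t) * K * t ^ 2 / n := by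
  intro n hn
  have hn0 : (0:ℝ) < n := by exact_mod_cast Nat.lt_of_lt_of_le Nat.zero_lt_one hn
  set τ : ℝ := t / n with hτdef
  have hτ0 : 0 ≤ τ := le_of_lt (div_pos ht hn0)
  -- (V τ)^k = V (k τ)
  have hVpow : ∀ k : ℕ, (V τ) ^ k = V (k * τ) := by
    intro k
    induction k with
    | zero => simpa using hV0.symm
    | succ k ih =>
      have hk : (0:ℝ) ≤ k * τ := mul_nonneg (Nat.cast_nonneg k) hτ0
      rw [pow_succ, ih, ← hVadd (k * τ) τ hk hτ0]
      congr 1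
      push_cast
      ring
  have hVt : (V τ) ^ n = V t := by
    rw [hVpow n]
    congr 1
    rw [hτdef]
    field_simp
  have key : ((C τ) ^ n) f - V t f
      = ∑ k ∈ Finset.range n, ((C τ) ^ (n - 1 - k) * (C τ - V τ) * (V τ) ^ k) f := by
    rw [← hVt]
    have := chernoff_tele (C τ) (V τ) n
    calc ((C τ) ^ n) f - ((V τ) ^ n) f = ((C τ) ^ n - (V τ) ^ n) f := rfl
      _ = _ := by rw [this]; exact ContinuousLinearMap.sum_apply _ _ _
  have hK2 : 0 ≤ K * τ ^ 2 := by
    have := horbit n hn 0 (Nat.lt_of_lt_of_le Nat.zero_lt_one hn)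
    exact le_trans (norm_nonneg _) this
  have hterm : ∀ k ∈ Finset.range n,
      ‖((C τ) ^ (n - 1 - k) * (C τ - V τ) * (V τ) ^ k) f‖
        ≤ Real.exp (w * t) * (K * τ ^ 2) := by
    intro k hk
    simp only [Finset.mem_range] at hk
    have horb : ‖(C τ - V τ) (((V τ) ^ k) f)‖ ≤ K * τ ^ 2 := by
      rw [hVpow k]
      have h := horbit n hn k hk
      have : (k : ℝ) * τ = k * t / n := by rw [hτdef]; ring
      rw [this]
      exact h
    have hnorm : ∀ j : ℕ, ‖(C τ) ^ j‖ ≤ Real.exp (w * τ) ^ j := by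
      intro j
      induction j with
      | zero => simpa [ContinuousLinearMap.one_def] using ContinuousLinearMap.norm_id_le
      | succ j ih =>
        rw [pow_succ, pow_succ]
        exact le_trans (norm_mul_le _ _)
          (mul_le_mul ih (hCbound τ hτ0) (norm_nonneg _)
            (pow_nonneg (Real.exp_nonneg _) _))
    have hCn : ‖(C τ) ^ (n - 1 - k)‖ ≤ Real.exp (w * t) := by
      set j := n - 1 - k with hjdef
      have hjle : (j : ℝ) ≤ n := by
        exact_mod_cast (Nat.sub_le _ _).trans (Nat.sub_le _ _)
      have h2 : τ * n = t := by rw [hτdef]; field_simp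
      calc ‖(C τ) ^ j‖ ≤ Real.exp (w * τ) ^ j := hnorm j
        _ = Real.exp (j * (w * τ)) := (Real.exp_nat_mul _ _).symm
        _ ≤ Real.exp (w * t) := by
            apply Real.exp_le_exp.mpr
            calc (j : ℝ) * (w * τ) ≤ n * (w * τ) :=
                  mul_le_mul_of_nonneg_right hjle (mul_nonneg hw hτ0)
              _ = w * t := by rw [← h2]; ring
    calc ‖((C τ) ^ (n - 1 - k) * (C τ - V τ) * (V τ) ^ k) f‖
        = ‖((C τ) ^ (n - 1 - k)) ((C τ - V τ) (((V τ) ^ k) f))‖ := rfl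
      _ ≤ ‖(C τ) ^ (n - 1 - k)‖ * ‖(C τ - V τ) (((V τ) ^ k) f)‖ :=
          ContinuousLinearMap.le_opNorm _ _
      _ ≤ Real.exp (w * t) * (K * τ ^ 2) :=
          mul_le_mul hCn horb (norm_nonneg _) (Real.exp_nonneg _)
  calc ‖((C τ) ^ n) f - V t f‖
      = ‖∑ k ∈ Finset.range n, ((C τ) ^ (n - 1 - k) * (C τ - V τ) * (V τ) ^ k) f‖ := by rw [key]
    _ ≤ ∑ k ∈ Finset.range n, ‖((C τ) ^ (n - 1 - k) * (C τ - V τ) * (V τ) ^ k) f‖ :=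
        norm_sum_le _ _
    _ ≤ ∑ _k ∈ Finset.range n, Real.exp (w * t) * (K * τ ^ 2) :=
        Finset.sum_le_sum hterm
    _ = n * (Real.exp (w * t) * (K * τ ^ 2)) := by
        rw [Finset.sum_const, Finset.card_range, nsmul_eq_mul]
    _ = Real.exp (w * t) * K * t ^ 2 / n := by
        rw [hτdef]; field_simp
end
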